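/- Let L(W,V) be a differentiable function of matrices W ∈ Mat(d₂,d₁), V ∈ Mat(d₃,d₂) such that L(A·W, V·A⁻¹) = L(W,V) for all invertible A near the identity (equivalently, trace((∂L/∂W)ᵀ B W) = trace((∂L/∂V)ᵀ V B) for all B ∈ Mat(d₂)). If (W(t),V(t)) solves gradient flow Ẇ = −∂L/∂W, V̇ = −∂L/∂V, then W(t)W(t)ᵀ − V(t)ᵀV(t) is constant. -/

import Mathlib

open Matrix

lemma traceW_std {d₁ d₂ : ℕ} (G W : Matrix (Fin d₂) (Fin d₁) ℝ) (a b : Fin d₂) :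
    (Gᵀ * ((Matrix.single a b 1 : Matrix (Fin d₂) (Fin d₂) ℝ) * W)).trace = ∑ k, G a k * W b k := by
  simp [Matrix.trace, Matrix.diag, Matrix.mul_apply, Matrix.single, ite_and,
    Finset.mul_sum, Finset.sum_mul]

lemma traceV_std {d₂ d₃ : ℕ} (G V : Matrix (Fin d₃) (Fin d₂) ℝ) (a b : Fin d₂) :
    (Gᵀ * (V * (Matrix.single a b 1 : Matrix (Fin d₂) (Fin d₂) ℝ))).trace = ∑ i, G i b * V i a := by
  simp [Matrix.trace, Matrix.diag, Matrix.mul_apply, Matrix.single, ite_and,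
    Finset.mul_sum, Finset.sum_mul]

theorem linear_network_gradient_flow_balancedness
    (d₁ d₂ d₃ : ℕ)
    (L : Matrix (Fin d₂) (Fin d₁) ℝ → Matrix (Fin d₃) (Fin d₂) ℝ → ℝ)
    (GW : Matrix (Fin d₂) (Fin d₁) ℝ → Matrix (Fin d₃) (Fin d₂) ℝ → Matrix (Fin d₂) (Fin d₁) ℝ)
    (GV : Matrix (Fin d₂) (Fin d₁) ℝ → Matrix (Fin d₃) (Fin d₂) ℝ → Matrix (Fin d₃) (Fin d₂) ℝ)
    (hGW : ∀ W V i j, HasDerivAt (fun s : ℝ => L (W + s • Matrix.single i j 1) V)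
      (GW W V i j) 0)
    (hGV : ∀ W V i j, HasDerivAt (fun s : ℝ => L W (V + s • Matrix.single i j 1))
      (GV W V i j) 0)
    (hinv : ∀ W V (B : Matrix (Fin d₂) (Fin d₂) ℝ),
      ((GW W V)ᵀ * (B * W)).trace = ((GV W V)ᵀ * (V * B)).trace)
    (W : ℝ → Matrix (Fin d₂) (Fin d₁) ℝ) (V : ℝ → Matrix (Fin d₃) (Fin d₂) ℝ)
    (hWflow : ∀ (i j) (t : ℝ), HasDerivAt (fun t => W t i j) (-(GW (W t) (V t)) i j) t)
    (hVflow : ∀ (i j) (t : ℝ), HasDerivAt (fun t => V t i j) (-(GV (W t) (V t)) i j) t) :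
    ∀ t s : ℝ, W t * (W t)ᵀ - (V t)ᵀ * V t = W s * (W s)ᵀ - (V s)ᵀ * V s := by
  intro t s
  ext a b
  set f : ℝ → ℝ := fun u =>
    (∑ k, W u a k * W u b k) - ∑ i, V u i a * V u i b with hf
  have key : ∀ u : ℝ, HasDerivAt f 0 u := by
    intro u
    have h1 : HasDerivAt (fun u => ∑ k, W u a k * W u b k)
        (∑ k, (-(GW (W u) (V u)) a k * W u b k + W u a k * -(GW (W u) (V u)) b k)) u :=
      HasDerivAt.fun_sum fun k _ => (hWflow a k u).mul (hWflow b k u)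
    have h2 : HasDerivAt (fun u => ∑ i, V u i a * V u i b)
        (∑ i, (-(GV (W u) (V u)) i a * V u i b + V u i a * -(GV (W u) (V u)) i b)) u :=
      HasDerivAt.fun_sum fun i _ => (hVflow i a u).mul (hVflow i b u)
    have hd := h1.sub h2
    have e1 := hinv (W u) (V u) (Matrix.single a b 1)
    have e2 := hinv (W u) (V u) (Matrix.single b a 1)
    rw [traceW_std, traceV_std] at e1 e2
    convert hd using 1
    case e'_4 => rfl
    case e'_5 => rfl
    case e'_8 => rfl
    have : (∑ k, (-(GW (W u) (V u)) a k * W u b k + W u a k * -(GW (W u) (V u)) b k))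
        = -(∑ k, GW (W u) (V u) a k * W u b k) - ∑ k, GW (W u) (V u) b k * W u a k := by
      rw [← Finset.sum_neg_distrib, ← Finset.sum_sub_distrib]
      congr 1; ext k; ring
    rw [this, e1, e2]
    have : (∑ i, (-(GV (W u) (V u)) i a * V u i b + V u i a * -(GV (W u) (V u)) i b))
        = -(∑ i, GV (W u) (V u) i a * V u i b) - ∑ i, GV (W u) (V u) i b * V u i a := by
      rw [← Finset.sum_neg_distrib, ← Finset.sum_sub_distrib]
      congr 1; ext i; ring
    rw [this]
    ring
  have hconst : f t = f s := by
    have hdiff : Differentiable ℝ f := fun u => (key u).differentiableAt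
    exact is_const_of_deriv_eq_zero hdiff (fun u => (key u).deriv) t s
  simpa [Matrix.sub_apply, Matrix.mul_apply, Matrix.transpose_apply, hf] using hconst
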